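/- (Deterministic version of the consistency bound.) Let y = Xβ₀ + ε with X ∈ ℝ^{n×p} whose columns x^j satisfy (1/n)Σᵢ x_{i,j}² = 1, and ε ∈ ℝⁿ an arbitrary fixed vector. Let α ∈ (0,1], λ_d ≥ 0, and suppose (1/n)·max_{1≤j≤p} |⟨ε, x^j⟩| ≤ α λ_s. Then for any global minimizer (β̂¹,…,β̂^G) of the SplitReg objective, (1/(2n))·Σ_{g=1}^G ‖Xβ̂^g − Xβ₀‖₂² ≤ G·( 2α λ_s ‖β₀‖₁ + λ_s·((1−α)/2)·‖β₀‖₂² + (λ_d (G−1)/2)·‖β₀‖₂² ), and consequently (1/(2n))·‖ X·((1/G)Σ_{g=1}^G β̂^g) − Xβ₀ ‖₂² ≤ 2α λ_s ‖β₀‖₁ + λ_s·((1−α)/2)·‖β₀‖₂² + (λ_d (G−1)/2)·‖β₀‖₂². -/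

import Mathlib

open Finset

/-- The soft-thresholding operator: `soft z γ = sign(z) * max 0 (|z| - γ)`. -/
noncomputable def soft (z γ : ℝ) : ℝ := Real.sign z * max 0 (|z| - γ)

/-- The SplitReg objective function for data `y`, design matrix `X`,
elastic net mixing parameter `α`, sparsity penalty `lam_s`, diversity penalty `lam_d`,
and coefficient matrix `β` (one column `β g` per group). -/
noncomputable def splitRegObj {n p G : ℕ} (y : Fin n → ℝ) (X : Matrix (Fin n) (Fin p) ℝ)
    (α lam_s lam_d : ℝ) (β : Fin G → Fin p → ℝ) : ℝ :=
  ∑ g : Fin G,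
    ((1 / (2 * (n : ℝ))) * ∑ i, (y i - ∑ j, X i j * β g j) ^ 2
      + lam_s * ((1 - α) / 2 * ∑ j, (β g j) ^ 2 + α * ∑ j, |β g j|)
      + lam_d / 2 * ∑ h ∈ Finset.univ.erase g, ∑ j, |β g j| * |β h j|)

/-- **Deterministic version of the consistency bound (Theorem 1).**
If `y = Xβ₀ + ε` with normalized columns and `(1/n) maxⱼ |⟨ε, x^j⟩| ≤ αλ_s`, then any
global minimizer of the SplitReg objective satisfies both the summed prediction error
bound and the bound for the averaged model. -/
theorem splitreg_deterministic_bound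
    {n p G : ℕ} (hn : 0 < n) (hG : 0 < G)
    (X : Matrix (Fin n) (Fin p) ℝ) (β0 : Fin p → ℝ) (ε : Fin n → ℝ)
    (hcol : ∀ j : Fin p, (1 / (n : ℝ)) * ∑ i, (X i j) ^ 2 = 1)
    (α lam_s lam_d : ℝ) (hα₁ : 0 < α) (hα₂ : α ≤ 1) (hd : 0 ≤ lam_d)
    (hnoise : ∀ j : Fin p, (1 / (n : ℝ)) * |∑ i, ε i * X i j| ≤ α * lam_s)
    (βhat : Fin G → Fin p → ℝ)
    (hmin : ∀ b : Fin G → Fin p → ℝ,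
      splitRegObj (fun i => ∑ j, X i j * β0 j + ε i) X α lam_s lam_d βhat
        ≤ splitRegObj (fun i => ∑ j, X i j * β0 j + ε i) X α lam_s lam_d b) :
    (1 / (2 * (n : ℝ))) *
        ∑ g, ∑ i, ((∑ j, X i j * βhat g j) - ∑ j, X i j * β0 j) ^ 2
      ≤ (G : ℝ) * (2 * α * lam_s * (∑ j, |β0 j|)
          + lam_s * ((1 - α) / 2) * (∑ j, (β0 j) ^ 2)
          + lam_d * ((G : ℝ) - 1) / 2 * (∑ j, (β0 j) ^ 2)) ∧
    (1 / (2 * (n : ℝ))) *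
        ∑ i, ((∑ j, X i j * ((1 / (G : ℝ)) * ∑ g, βhat g j)) - ∑ j, X i j * β0 j) ^ 2
      ≤ 2 * α * lam_s * (∑ j, |β0 j|)
          + lam_s * ((1 - α) / 2) * (∑ j, (β0 j) ^ 2)
          + lam_d * ((G : ℝ) - 1) / 2 * (∑ j, (β0 j) ^ 2) := by
  classical
  have hn' : (0:ℝ) < n := by exact_mod_cast hn
  have hG' : (0:ℝ) < G := by exact_mod_cast hG
  rcases Nat.eq_zero_or_pos p with hp | hp
  · subst hp
    simp
  obtain ⟨j0⟩ := Fin.pos_iff_nonempty.mp hp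
  have hals : 0 ≤ α * lam_s := le_trans (by positivity) (hnoise j0)
  have hls : 0 ≤ lam_s := nonneg_of_mul_nonneg_right hals hα₁
  -- abbreviations
  set Q1 : ℝ := ∑ j, |β0 j| with hQ1
  set Q2 : ℝ := ∑ j, (β0 j) ^ 2 with hQ2
  set S : ℝ := ∑ i, (ε i) ^ 2 with hS
  set A : Fin G → ℝ :=
    fun g => ∑ i, ((∑ j, X i j * βhat g j) - ∑ j, X i j * β0 j) ^ 2 with hA
  set C : Fin G → ℝ :=
    fun g => ∑ j, (∑ i, ε i * X i j) * (βhat g j - β0 j) with hC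
  set T : Fin G → ℝ := fun g => ∑ j, |βhat g j| with hT
  -- residual decomposition
  have hres : ∀ g, ∑ i, ((∑ j, X i j * β0 j + ε i) - ∑ j, X i j * βhat g j) ^ 2
      = S - 2 * C g + A g := by
    intro g
    have hcross : ∑ i, ε i * ((∑ j, X i j * βhat g j) - ∑ j, X i j * β0 j) = C g := by
      rw [hC]
      rw [show (∑ i, ε i * ((∑ j, X i j * βhat g j) - ∑ j, X i j * β0 j))
          = ∑ i, ∑ j, ε i * X i j * (βhat g j - β0 j) from
        Finset.sum_congr rfl fun i _ => by
          rw [← Finset.sum_sub_distrib, Finset.mul_sum]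
          exact Finset.sum_congr rfl fun j _ => by ring]
      rw [Finset.sum_comm]
      exact Finset.sum_congr rfl fun j _ => by rw [Finset.sum_mul]
    calc ∑ i, ((∑ j, X i j * β0 j + ε i) - ∑ j, X i j * βhat g j) ^ 2
        = ∑ i, ((ε i) ^ 2
            - 2 * (ε i * ((∑ j, X i j * βhat g j) - ∑ j, X i j * β0 j))
            + ((∑ j, X i j * βhat g j) - ∑ j, X i j * β0 j) ^ 2) :=
          Finset.sum_congr rfl fun i _ => by ring
      _ = S - 2 * C g + A g := by
          rw [Finset.sum_add_distrib, Finset.sum_sub_distrib, ← Finset.mul_sum, hcross]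
  -- noise bound on C
  have hCle : ∀ g, C g ≤ (n : ℝ) * (α * lam_s) * (T g + Q1) := by
    intro g
    have hEj : ∀ j : Fin p, |∑ i, ε i * X i j| ≤ (n : ℝ) * (α * lam_s) := by
      intro j
      have := hnoise j
      rw [div_mul_eq_mul_div, one_mul, div_le_iff₀ hn'] at this
      linarith [this]
    calc C g ≤ ∑ j, ((n : ℝ) * (α * lam_s)) * (|βhat g j| + |β0 j|) := by
          refine Finset.sum_le_sum fun j _ => ?_
          calc (∑ i, ε i * X i j) * (βhat g j - β0 j)
              ≤ |(∑ i, ε i * X i j) * (βhat g j - β0 j)| := le_abs_self _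
            _ = |∑ i, ε i * X i j| * |βhat g j - β0 j| := abs_mul _ _
            _ ≤ ((n : ℝ) * (α * lam_s)) * (|βhat g j| + |β0 j|) := by
                apply mul_le_mul (hEj j) (abs_sub _ _) (abs_nonneg _)
                positivity
      _ = (n : ℝ) * (α * lam_s) * (T g + Q1) := by
          rw [← Finset.mul_sum, Finset.sum_add_distrib, hT, hQ1]
  -- evaluate the objective at the constant β0 candidate
  have hobj0 : splitRegObj (fun i => ∑ j, X i j * β0 j + ε i) X α lam_s lam_d
      (fun _ : Fin G => β0)
      = (G : ℝ) * ((1 / (2 * (n : ℝ))) * S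
          + lam_s * ((1 - α) / 2 * Q2 + α * Q1)
          + lam_d / 2 * (((G : ℝ) - 1) * Q2)) := by
    unfold splitRegObj
    have hterm : ∀ g : Fin G,
        ((1 / (2 * (n : ℝ))) * ∑ i, ((∑ j, X i j * β0 j + ε i) - ∑ j, X i j * β0 j) ^ 2
          + lam_s * ((1 - α) / 2 * ∑ j, (β0 j) ^ 2 + α * ∑ j, |β0 j|)
          + lam_d / 2 * ∑ h ∈ Finset.univ.erase g, ∑ j, |β0 j| * |β0 j|)
        = ((1 / (2 * (n : ℝ))) * S + lam_s * ((1 - α) / 2 * Q2 + α * Q1)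
            + lam_d / 2 * (((G : ℝ) - 1) * Q2)) := by
      intro g
      have h1 : ∑ i, ((∑ j, X i j * β0 j + ε i) - ∑ j, X i j * β0 j) ^ 2 = S :=
        Finset.sum_congr rfl fun i _ => by ring_nf
      have h2 : ∑ j, |β0 j| * |β0 j| = Q2 := by
        rw [hQ2]; exact Finset.sum_congr rfl fun j _ => by rw [abs_mul_abs_self, sq]
      have h3 : ∑ h ∈ Finset.univ.erase g, ∑ j, |β0 j| * |β0 j|
          = ((G : ℝ) - 1) * Q2 := by
        rw [Finset.sum_congr rfl fun h _ => h2, Finset.sum_const,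
          Finset.card_erase_of_mem (Finset.mem_univ g), Finset.card_univ,
          Fintype.card_fin, nsmul_eq_mul, Nat.cast_sub hG, Nat.cast_one]
      rw [h1, h3, hQ1, hQ2]
    rw [Finset.sum_congr rfl fun g _ => hterm g, Finset.sum_const, Finset.card_univ,
      Fintype.card_fin, nsmul_eq_mul]
  -- per-group lower bound on the objective terms
  have hper : ∀ g : Fin G,
      (1 / (2 * (n : ℝ))) * S - α * lam_s * Q1 + (1 / (2 * (n : ℝ))) * A g
      ≤ (1 / (2 * (n : ℝ)))
          * ∑ i, ((∑ j, X i j * β0 j + ε i) - ∑ j, X i j * βhat g j) ^ 2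
        + lam_s * ((1 - α) / 2 * ∑ j, (βhat g j) ^ 2 + α * ∑ j, |βhat g j|)
        + lam_d / 2 * ∑ h ∈ Finset.univ.erase g, ∑ j, |βhat g j| * |βhat h j| := by
    intro g
    rw [hres g]
    have hCn : (1 / (n : ℝ)) * C g ≤ (α * lam_s) * (T g + Q1) := by
      have := mul_le_mul_of_nonneg_left (hCle g) (le_of_lt (one_div_pos.mpr hn'))
      calc (1 / (n : ℝ)) * C g ≤ (1 / (n : ℝ)) * ((n : ℝ) * (α * lam_s) * (T g + Q1)) :=
            this
        _ = (α * lam_s) * (T g + Q1) := by field_simp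
    have hsq : 0 ≤ ∑ j, (βhat g j) ^ 2 := Finset.sum_nonneg fun j _ => sq_nonneg _
    have hTnn : 0 ≤ T g := Finset.sum_nonneg fun j _ => abs_nonneg _
    have hDnn : 0 ≤ ∑ h ∈ Finset.univ.erase g, ∑ j, |βhat g j| * |βhat h j| :=
      Finset.sum_nonneg fun h _ => Finset.sum_nonneg fun j _ =>
        mul_nonneg (abs_nonneg _) (abs_nonneg _)
    have hsplit : (1 / (2 * (n : ℝ))) * (S - 2 * C g + A g)
        = (1 / (2 * (n : ℝ))) * S - (1 / (n : ℝ)) * C g + (1 / (2 * (n : ℝ))) * A g := by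
      field_simp
    rw [hsplit]
    have hCn' : (1 / (n : ℝ)) * C g
        ≤ (α * lam_s) * ((∑ j, |βhat g j|) + Q1) := hCn
    nlinarith [mul_nonneg (mul_nonneg hls (by linarith : (0:ℝ) ≤ (1 - α) / 2)) hsq,
      hCn', hDnn, Finset.sum_nonneg (fun j (_ : j ∈ Finset.univ) => abs_nonneg (βhat g j))]
  -- sum the per-group bounds and use minimality
  have hsum : (G : ℝ) * ((1 / (2 * (n : ℝ))) * S - α * lam_s * Q1)
      + (1 / (2 * (n : ℝ))) * ∑ g, A g
      ≤ (G : ℝ) * ((1 / (2 * (n : ℝ))) * S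
          + lam_s * ((1 - α) / 2 * Q2 + α * Q1)
          + lam_d / 2 * (((G : ℝ) - 1) * Q2)) := by
    have h1 := Finset.sum_le_sum fun g (_ : g ∈ Finset.univ) => hper g
    have h2 := hmin (fun _ : Fin G => β0)
    rw [hobj0] at h2
    unfold splitRegObj at h2
    have h3 : ∑ g : Fin G, ((1 / (2 * (n : ℝ))) * S - α * lam_s * Q1
        + (1 / (2 * (n : ℝ))) * A g)
        = (G : ℝ) * ((1 / (2 * (n : ℝ))) * S - α * lam_s * Q1)
          + (1 / (2 * (n : ℝ))) * ∑ g, A g := by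
      rw [Finset.sum_add_distrib, Finset.sum_const, Finset.card_univ, Fintype.card_fin,
        nsmul_eq_mul, ← Finset.mul_sum]
    rw [h3] at h1
    exact le_trans h1 h2
  have main : (1 / (2 * (n : ℝ))) * ∑ g, A g ≤ (G : ℝ)
      * (2 * α * lam_s * Q1 + lam_s * ((1 - α) / 2) * Q2
        + lam_d * ((G : ℝ) - 1) / 2 * Q2) := by
    nlinarith [hsum]
  refine ⟨by simpa [hA] using main, ?_⟩
  -- averaged model bound via Jensen
  have havg : ∀ i : Fin n,
      ((∑ j, X i j * ((1 / (G : ℝ)) * ∑ g, βhat g j)) - ∑ j, X i j * β0 j)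
      = (1 / (G : ℝ)) * ∑ g, ((∑ j, X i j * βhat g j) - ∑ j, X i j * β0 j) := by
    intro i
    have h1 : ∑ j, X i j * ((1 / (G : ℝ)) * ∑ g, βhat g j)
        = (1 / (G : ℝ)) * ∑ g, ∑ j, X i j * βhat g j := by
      calc ∑ j, X i j * ((1 / (G : ℝ)) * ∑ g, βhat g j)
          = ∑ j, ∑ g, (1 / (G : ℝ)) * (X i j * βhat g j) := by
            refine Finset.sum_congr rfl fun j _ => ?_
            rw [Finset.mul_sum, Finset.mul_sum]
            exact Finset.sum_congr rfl fun g _ => by ring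
        _ = ∑ g, ∑ j, (1 / (G : ℝ)) * (X i j * βhat g j) := Finset.sum_comm
        _ = (1 / (G : ℝ)) * ∑ g, ∑ j, X i j * βhat g j := by
            simp only [← Finset.mul_sum]
    have h2 : ∑ j, X i j * β0 j = (1 / (G : ℝ)) * ∑ g : Fin G, ∑ j, X i j * β0 j := by
      rw [Finset.sum_const, Finset.card_univ, Fintype.card_fin, nsmul_eq_mul]
      field_simp
    rw [h1]
    rw [Finset.sum_sub_distrib, mul_sub, ← h2]
  have hjensen : ∑ i, ((∑ j, X i j * ((1 / (G : ℝ)) * ∑ g, βhat g j))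
        - ∑ j, X i j * β0 j) ^ 2
      ≤ (1 / (G : ℝ)) * ∑ g, A g := by
    calc ∑ i, ((∑ j, X i j * ((1 / (G : ℝ)) * ∑ g, βhat g j)) - ∑ j, X i j * β0 j) ^ 2
        = ∑ i, (1 / (G : ℝ)) ^ 2
            * (∑ g, ((∑ j, X i j * βhat g j) - ∑ j, X i j * β0 j)) ^ 2 := by
          refine Finset.sum_congr rfl fun i _ => ?_
          rw [havg i, mul_pow]
      _ ≤ ∑ i, (1 / (G : ℝ)) ^ 2
            * ((G : ℝ) * ∑ g, ((∑ j, X i j * βhat g j) - ∑ j, X i j * β0 j) ^ 2) := by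
          refine Finset.sum_le_sum fun i _ => ?_
          refine mul_le_mul_of_nonneg_left ?_ (by positivity)
          have := sq_sum_le_card_mul_sum_sq
            (s := (Finset.univ : Finset (Fin G)))
            (f := fun g => ((∑ j, X i j * βhat g j) - ∑ j, X i j * β0 j))
          simpa [Finset.card_univ] using this
      _ = (1 / (G : ℝ)) * ∑ g, A g := by
          have hswap : ∑ i, ∑ g, ((∑ j, X i j * βhat g j) - ∑ j, X i j * β0 j) ^ 2
              = ∑ g, A g := Finset.sum_comm
          have hstep : ∀ i : Fin n, (1 / (G : ℝ)) ^ 2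
              * ((G : ℝ) * ∑ g, ((∑ j, X i j * βhat g j) - ∑ j, X i j * β0 j) ^ 2)
              = (1 / (G : ℝ)) * ∑ g, ((∑ j, X i j * βhat g j) - ∑ j, X i j * β0 j) ^ 2 := by
            intro i
            field_simp
          rw [Finset.sum_congr rfl fun i _ => hstep i, ← Finset.mul_sum, hswap]
  calc (1 / (2 * (n : ℝ))) * ∑ i, ((∑ j, X i j * ((1 / (G : ℝ)) * ∑ g, βhat g j))
        - ∑ j, X i j * β0 j) ^ 2
      ≤ (1 / (2 * (n : ℝ))) * ((1 / (G : ℝ)) * ∑ g, A g) :=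
        mul_le_mul_of_nonneg_left hjensen (by positivity)
    _ = (1 / (G : ℝ)) * ((1 / (2 * (n : ℝ))) * ∑ g, A g) := by ring
    _ ≤ (1 / (G : ℝ)) * ((G : ℝ) * (2 * α * lam_s * Q1 + lam_s * ((1 - α) / 2) * Q2
          + lam_d * ((G : ℝ) - 1) / 2 * Q2)) :=
        mul_le_mul_of_nonneg_left main (by positivity)
    _ = 2 * α * lam_s * Q1 + lam_s * ((1 - α) / 2) * Q2
          + lam_d * ((G : ℝ) - 1) / 2 * Q2 := by
        field_simp
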